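/- Let A be an n×n matrix over ℝ∪{−∞} and let λ = max_{1≤m≤n} (1/m)·max over all cyclic sequences k_0, k_1, …, k_m = k_0 in {1,…,n} of (A_{k_0k_1} + ⋯ + A_{k_{m−1}k_m}) be its max-plus spectral radius (the maximum cycle mean). Assume λ > −∞. Then the minimum over all x ∈ ℝⁿ of G(x) = max_{1≤i,j≤n}( A_{ij} + x_j − x_i ) equals λ, and this minimum is attained. -/

import Mathlib

/-!
Max-plus semifield modeled as `WithBot ℝ` (= ℝ ∪ {−∞}).
The spectral radius λ of A is the maximum cycle mean, λ = max_{1≤m≤n} (1/m)·max_i (A^m)_{ii},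
where (A^m)_{ii} is the maximum weight of a cyclic sequence of length m through i;
the assumption λ > −∞ is `specRad A ≠ ⊥`.
-/

/-- Max-plus matrix product: (A⊗B)_{ij} = max_k (A_{ik} + B_{kj}). -/
noncomputable def mmul {n : ℕ} (A B : Fin n → Fin n → WithBot ℝ) :
    Fin n → Fin n → WithBot ℝ :=
  fun i j => Finset.univ.sup fun k => A i k + B k j

/-- Max-plus matrix powers, with A⁰ = I (0 on the diagonal, −∞ elsewhere). -/
noncomputable def mpow {n : ℕ} (A : Fin n → Fin n → WithBot ℝ) :
    ℕ → Fin n → Fin n → WithBot ℝ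
  | 0 => fun i j => if i = j then (0 : WithBot ℝ) else ⊥
  | m + 1 => mmul (mpow A m) A

/-- Kleene star: (A*)_{ij} = max_{0 ≤ m ≤ n−1} (A^m)_{ij}. -/
noncomputable def mstar {n : ℕ} (A : Fin n → Fin n → WithBot ℝ) :
    Fin n → Fin n → WithBot ℝ :=
  fun i j => (Finset.range n).sup fun m => mpow A m i j

/-- Max-plus spectral radius (maximum cycle mean):
λ = max_{1 ≤ m ≤ n} (1/m)·max_i (A^m)_{ii}, computed in ℝ ∪ {−∞}. -/
noncomputable def specRad {n : ℕ} (A : Fin n → Fin n → WithBot ℝ) : WithBot ℝ :=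
  (Finset.Icc 1 n).sup fun m =>
    WithBot.map (fun r => r / (m : ℝ)) (Finset.univ.sup fun i => mpow A m i i)

lemma wsup_add {ι : Type*} (s : Finset ι) (f : ι → WithBot ℝ) (c : WithBot ℝ) :
    s.sup f + c = s.sup fun a => f a + c := by
  induction s using Finset.cons_induction with
  | empty => simp [WithBot.bot_add]
  | cons a s ha ih => rw [Finset.sup_cons, Finset.sup_cons, ← ih, ← max_add_add_right]

lemma wadd_sup {ι : Type*} (s : Finset ι) (f : ι → WithBot ℝ) (c : WithBot ℝ) :
    c + s.sup f = s.sup fun a => c + f a := by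
  rw [add_comm, wsup_add]
  exact Finset.sup_congr rfl fun a _ => add_comm _ _

lemma mmul_assoc {n : ℕ} (A B C : Fin n → Fin n → WithBot ℝ) :
    mmul (mmul A B) C = mmul A (mmul B C) := by
  funext i j
  simp only [mmul, wsup_add, wadd_sup, add_assoc]
  exact Finset.sup_comm _ _ _

lemma mmul_one {n : ℕ} (A : Fin n → Fin n → WithBot ℝ) : mmul A (mpow A 0) = A := by
  funext i j
  apply le_antisymm
  · apply Finset.sup_le
    intro k _
    by_cases h : k = j
    · subst h; simp [mpow]
    · simp [mpow, h, WithBot.add_bot]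
  · refine le_trans ?_ (Finset.le_sup (f := fun k => A i k + mpow A 0 k j) (Finset.mem_univ j))
    simp [mpow]

lemma one_mmul {n : ℕ} (A : Fin n → Fin n → WithBot ℝ) : mmul (mpow A 0) A = A := by
  funext i j
  apply le_antisymm
  · apply Finset.sup_le
    intro k _
    by_cases h : i = k
    · subst h; simp [mpow]
    · simp [mpow, h, WithBot.bot_add]
  · refine le_trans ?_ (Finset.le_sup (f := fun k => mpow A 0 i k + A k j) (Finset.mem_univ i))
    simp [mpow]

lemma mpow_succ_left {n : ℕ} (A : Fin n → Fin n → WithBot ℝ) (m : ℕ) :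
    mpow A (m + 1) = mmul A (mpow A m) := by
  induction m with
  | zero => show mmul (mpow A 0) A = mmul A (mpow A 0); rw [one_mmul, mmul_one]
  | succ m ih =>
      show mmul (mpow A (m+1)) A = _
      rw [ih, mmul_assoc, ← ih]; rfl

noncomputable def walkWt {n : ℕ} (A : Fin n → Fin n → WithBot ℝ) (m : ℕ) (w : ℕ → Fin n) :
    WithBot ℝ :=
  (Finset.range m).sum fun t => A (w t) (w (t + 1))

lemma walkWt_zero {n : ℕ} (A : Fin n → Fin n → WithBot ℝ) (w : ℕ → Fin n) :
    walkWt A 0 w = 0 := by simp [walkWt]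

lemma walkWt_succ {n : ℕ} (A : Fin n → Fin n → WithBot ℝ) (m : ℕ) (w : ℕ → Fin n) :
    walkWt A (m + 1) w = walkWt A m w + A (w m) (w (m + 1)) :=
  Finset.sum_range_succ _ _

lemma walkWt_add {n : ℕ} (A : Fin n → Fin n → WithBot ℝ) (p q : ℕ) (w : ℕ → Fin n) :
    walkWt A (p + q) w = walkWt A p w + walkWt A q (fun t => w (p + t)) := by
  have := Finset.sum_range_add (fun t => A (w t) (w (t + 1))) p q
  simpa [walkWt, Nat.add_assoc] using this

lemma walkWt_congr {n : ℕ} (A : Fin n → Fin n → WithBot ℝ) (m : ℕ) (w w' : ℕ → Fin n)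
    (h : ∀ t ≤ m, w t = w' t) : walkWt A m w = walkWt A m w' := by
  refine Finset.sum_congr rfl fun t ht => ?_
  have ht' := Finset.mem_range.mp ht
  rw [h t (by omega), h (t + 1) (by omega)]

lemma walkWt_le_mpow {n : ℕ} (A : Fin n → Fin n → WithBot ℝ) :
    ∀ (m : ℕ) (w : ℕ → Fin n), walkWt A m w ≤ mpow A m (w 0) (w m) := by
  intro m
  induction m with
  | zero => intro w; simp [walkWt, mpow]
  | succ m ih =>
      intro w
      rw [walkWt_succ]
      calc walkWt A m w + A (w m) (w (m + 1))
          ≤ mpow A m (w 0) (w m) + A (w m) (w (m + 1)) := add_le_add_left (ih w) _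
        _ ≤ mpow A (m + 1) (w 0) (w (m + 1)) :=
            Finset.le_sup (f := fun k => mpow A m (w 0) k + A k (w (m + 1)))
              (Finset.mem_univ (w m))

lemma exists_walk {n : ℕ} (A : Fin n → Fin n → WithBot ℝ) :
    ∀ (m : ℕ) (i j : Fin n), mpow A m i j ≠ ⊥ →
      ∃ w : ℕ → Fin n, w 0 = i ∧ w m = j ∧ mpow A m i j ≤ walkWt A m w := by
  intro m
  induction m with
  | zero =>
      intro i j h
      by_cases hij : i = j
      · subst hij
        exact ⟨fun _ => i, rfl, rfl, by simp [mpow, walkWt]⟩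
      · exact absurd (by simp [mpow, hij]) h
  | succ m ih =>
      intro i j h
      have hne : (Finset.univ : Finset (Fin n)).Nonempty := ⟨i, Finset.mem_univ i⟩
      obtain ⟨k, -, hk⟩ := Finset.exists_mem_eq_sup Finset.univ hne
        (fun k => mpow A m i k + A k j)
      have heq : mpow A (m + 1) i j = mpow A m i k + A k j := hk
      have h1 : mpow A m i k ≠ ⊥ := by
        intro hb
        rw [heq, hb, WithBot.bot_add] at h
        exact h rfl
      obtain ⟨w, hw0, hwm, hwle⟩ := ih i k h1
      refine ⟨fun t => if t ≤ m then w t else j, by simpa using hw0, by simp, ?_⟩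
      rw [walkWt_succ]
      have hc : walkWt A m (fun t => if t ≤ m then w t else j) = walkWt A m w :=
        walkWt_congr _ _ _ _ fun t ht => by simp [ht]
      rw [hc]
      have e1 : (if m ≤ m then w m else j) = k := by rw [if_pos le_rfl, hwm]
      have e2 : (if m + 1 ≤ m then w (m + 1) else j) = j := by rw [if_neg (by omega)]
      simp only [e1, e2, heq]
      exact add_le_add_left hwle _

/-- Candidate potential: x_i = max over path lengths < n of max endpoint of (B^m)_{i·}. -/
noncomputable def xv {n : ℕ} (B : Fin n → Fin n → WithBot ℝ) (i : Fin n) : WithBot ℝ :=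
  (Finset.range n).sup fun m => Finset.univ.sup fun k => mpow B m i k

lemma walkWt_le_xv {n : ℕ} (B : Fin n → Fin n → WithBot ℝ)
    (hR : ∀ c, 1 ≤ c → c ≤ n → ∀ v : Fin n, mpow B c v v ≤ 0) :
    ∀ (m : ℕ) (w : ℕ → Fin n), walkWt B m w ≤ xv B (w 0) := by
  intro m
  induction m using Nat.strong_induction_on with
  | _ m IH =>
    intro w
    by_cases hmn : m < n
    · calc walkWt B m w ≤ mpow B m (w 0) (w m) := walkWt_le_mpow B m w
        _ ≤ Finset.univ.sup (fun k => mpow B m (w 0) k) := Finset.le_sup (Finset.mem_univ _)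
        _ ≤ xv B (w 0) :=
            Finset.le_sup (f := fun m' => Finset.univ.sup fun k => mpow B m' (w 0) k)
              (Finset.mem_range.mpr hmn)
    · -- m ≥ n; pigeonhole
      rcases Nat.eq_zero_or_pos n with hn | hn
      · subst hn; exact (w 0).elim0
      have hcard : Fintype.card (Fin n) < Fintype.card (Fin (n + 1)) := by simp
      obtain ⟨a, b, hab, hwab⟩ :=
        Fintype.exists_ne_map_eq_of_card_lt (fun t : Fin (n + 1) => w t) hcard
      obtain ⟨p, q, hpq, hqn, hwpq⟩ : ∃ p q : ℕ, p < q ∧ q ≤ n ∧ w p = w q := by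
        rcases lt_or_gt_of_ne (Fin.val_ne_of_ne hab) with h | h
        · exact ⟨a, b, h, Nat.lt_succ_iff.mp b.isLt, hwab⟩
        · exact ⟨b, a, h, Nat.lt_succ_iff.mp a.isLt, hwab.symm⟩
      set c := q - p with hc
      set s := m - q with hs
      have hm : m = p + (c + s) := by omega
      have hqpc : q = p + c := by omega
      -- split the walk
      have hsplit : walkWt B m w =
          walkWt B p w + (walkWt B c (fun t => w (p + t)) +
            walkWt B s (fun t => w (q + t))) := by
        rw [hm, walkWt_add, walkWt_add]
        have : (fun t => w (p + (c + t))) = fun t => w (q + t) := by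
          funext t; congr 1; omega
        rw [this]
      have hmid : walkWt B c (fun t => w (p + t)) ≤ 0 := by
        have h1 := walkWt_le_mpow B c (fun t => w (p + t))
        simp only [Nat.add_zero] at h1
        rw [← hqpc] at h1
        rw [← hwpq] at h1
        exact h1.trans (hR c (by omega) (by omega) (w p))
      -- the shortened walk
      set w'' : ℕ → Fin n := fun t => if t ≤ p then w t else w (t + c) with hw''
      have hsplit2 : walkWt B (p + s) w'' =
          walkWt B p w + walkWt B s (fun t => w (q + t)) := by
        rw [walkWt_add]
        congr 1
        · exact walkWt_congr _ _ _ _ fun t ht => by simp [hw'', ht]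
        · refine walkWt_congr _ _ _ _ fun t _ => ?_
          rcases Nat.eq_zero_or_pos t with h0 | h0
          · subst h0
            simp only [hw'', Nat.add_zero, if_pos le_rfl]
            exact hwpq
          · simp only [hw'', if_neg (by omega : ¬ p + t ≤ p)]
            congr 1; omega
      have hle2 : walkWt B m w ≤ walkWt B (p + s) w'' := by
        rw [hsplit, hsplit2]
        refine add_le_add_right ?_ _
        calc walkWt B c (fun t => w (p + t)) + walkWt B s (fun t => w (q + t))
            ≤ 0 + walkWt B s (fun t => w (q + t)) := add_le_add_left hmid _
          _ = _ := zero_add _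
      have hlt : p + s < m := by omega
      have h3 := IH (p + s) hlt w''
      have hw0 : w'' 0 = w 0 := by simp [hw'']
      rw [hw0] at h3
      exact hle2.trans h3

lemma mpow_le_xv {n : ℕ} (B : Fin n → Fin n → WithBot ℝ)
    (hR : ∀ c, 1 ≤ c → c ≤ n → ∀ v : Fin n, mpow B c v v ≤ 0)
    (m : ℕ) (i j : Fin n) : mpow B m i j ≤ xv B i := by
  by_cases hb : mpow B m i j = ⊥
  · simp [hb]
  · obtain ⟨w, hw0, -, hle⟩ := exists_walk B m i j hb
    have := walkWt_le_xv B hR m w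
    rw [hw0] at this
    exact hle.trans this

lemma feas {n : ℕ} (B : Fin n → Fin n → WithBot ℝ)
    (hR : ∀ c, 1 ≤ c → c ≤ n → ∀ v : Fin n, mpow B c v v ≤ 0)
    (i j : Fin n) : B i j + xv B j ≤ xv B i := by
  rw [xv, wadd_sup]
  apply Finset.sup_le
  intro m _
  rw [wadd_sup]
  apply Finset.sup_le
  intro k _
  have h1 : B i j + mpow B m j k ≤ mpow B (m + 1) i k := by
    rw [mpow_succ_left]
    exact Finset.le_sup (f := fun l => B i l + mpow B m l k) (Finset.mem_univ j)
  exact h1.trans (mpow_le_xv B hR (m + 1) i k)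

lemma mpow_succ_apply {n : ℕ} (A : Fin n → Fin n → WithBot ℝ) (m : ℕ) (i j : Fin n) :
    mpow A (m + 1) i j = Finset.univ.sup fun k => mpow A m i k + A k j := rfl

lemma mpow_shift {n : ℕ} (A : Fin n → Fin n → WithBot ℝ) (lam : ℝ) :
    ∀ (m : ℕ) (i j : Fin n),
      mpow (fun i j => A i j + ((-lam : ℝ) : WithBot ℝ)) m i j
        = mpow A m i j + ((-(m * lam) : ℝ) : WithBot ℝ) := by
  intro m
  induction m with
  | zero =>
      intro i j
      by_cases h : i = j <;> simp [mpow, h, WithBot.bot_add]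
  | succ m ih =>
      intro i j
      rw [mpow_succ_apply, mpow_succ_apply, wsup_add]
      refine Finset.sup_congr rfl fun k _ => ?_
      rw [ih]
      have hc : ((-(m * lam) : ℝ) : WithBot ℝ) + ((-lam : ℝ) : WithBot ℝ)
          = ((-((m + 1 : ℕ) * lam) : ℝ) : WithBot ℝ) := by
        rw [← WithBot.coe_add]
        congr 1
        push_cast
        ring
      calc mpow A m i k + ((-(m * lam) : ℝ) : WithBot ℝ) + (A k j + ((-lam : ℝ) : WithBot ℝ))
          = mpow A m i k + A k j
            + (((-(m * lam) : ℝ) : WithBot ℝ) + ((-lam : ℝ) : WithBot ℝ)) := by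
            rw [add_add_add_comm]
        _ = mpow A m i k + A k j + ((-((m + 1 : ℕ) * lam) : ℝ) : WithBot ℝ) := by rw [hc]

lemma lower_bound {n : ℕ} (A : Fin n → Fin n → WithBot ℝ) (hlam : specRad A ≠ ⊥)
    (x : Fin n → ℝ) :
    specRad A ≤ Finset.univ.sup fun i => Finset.univ.sup fun j =>
      A i j + ((x j - x i : ℝ) : WithBot ℝ) := by
  set g : WithBot ℝ := Finset.univ.sup fun i => Finset.univ.sup fun j =>
      A i j + ((x j - x i : ℝ) : WithBot ℝ) with hgdef
  by_cases hgb : g = ⊥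
  · exfalso
    apply hlam
    have hAb : ∀ i j, A i j = ⊥ := by
      intro i j
      have h1 : A i j + ((x j - x i : ℝ) : WithBot ℝ) ≤ g := by
        refine le_trans (Finset.le_sup (f := fun j => A i j + ((x j - x i : ℝ) : WithBot ℝ))
          (Finset.mem_univ j)) ?_
        exact Finset.le_sup (f := fun i => Finset.univ.sup fun j =>
          A i j + ((x j - x i : ℝ) : WithBot ℝ)) (Finset.mem_univ i)
      rw [hgb, le_bot_iff, WithBot.add_eq_bot] at h1
      rcases h1 with h | h
      · exact h
      · exact absurd h (WithBot.coe_ne_bot)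
    have hmp : ∀ (m : ℕ) (i j : Fin n), mpow A (m + 1) i j = ⊥ := by
      intro m i j
      rw [mpow_succ_apply, Finset.sup_eq_bot_iff]
      intro k _
      rw [hAb k j, WithBot.add_bot]
    rw [specRad, Finset.sup_eq_bot_iff]
    intro m hm
    have h1 : 1 ≤ m := (Finset.mem_Icc.mp hm).1
    obtain ⟨m', rfl⟩ : ∃ m', m = m' + 1 := ⟨m - 1, by omega⟩
    have : (Finset.univ.sup fun i => mpow A (m' + 1) i i) = ⊥ := by
      rw [Finset.sup_eq_bot_iff]; intro i _; exact hmp m' i i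
    rw [this, WithBot.map_bot]
  · obtain ⟨gr, hgr⟩ := WithBot.ne_bot_iff_exists.mp hgb
    have hb : ∀ i j : Fin n, A i j ≤ ((gr + x i - x j : ℝ) : WithBot ℝ) := by
      intro i j
      have h1 : A i j + ((x j - x i : ℝ) : WithBot ℝ) ≤ (gr : WithBot ℝ) := by
        rw [hgr]
        refine le_trans (Finset.le_sup (f := fun j => A i j + ((x j - x i : ℝ) : WithBot ℝ))
          (Finset.mem_univ j)) ?_
        exact Finset.le_sup (f := fun i => Finset.univ.sup fun j =>
          A i j + ((x j - x i : ℝ) : WithBot ℝ)) (Finset.mem_univ i)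
      cases hA : A i j with
      | bot => exact bot_le
      | coe a =>
          rw [hA, ← WithBot.coe_add, WithBot.coe_le_coe] at h1
          rw [WithBot.coe_le_coe]
          linarith
    have key : ∀ (m : ℕ) (i j : Fin n),
        mpow A m i j ≤ ((m * gr + x i - x j : ℝ) : WithBot ℝ) := by
      intro m
      induction m with
      | zero =>
          intro i j
          by_cases h : i = j
          · subst h
            simp [mpow]
          · simp [mpow, h]
      | succ m ih =>
          intro i j
          rw [mpow_succ_apply]
          apply Finset.sup_le
          intro k _
          calc mpow A m i k + A k j
              ≤ ((m * gr + x i - x k : ℝ) : WithBot ℝ) + ((gr + x k - x j : ℝ) : WithBot ℝ) :=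
                add_le_add (ih i k) (hb k j)
            _ = (((m + 1 : ℕ) * gr + x i - x j : ℝ) : WithBot ℝ) := by
                rw [← WithBot.coe_add]
                exact WithBot.coe_eq_coe.mpr (by push_cast; ring)
    rw [← hgr]
    apply Finset.sup_le
    intro m hm
    obtain ⟨h1, h2⟩ := Finset.mem_Icc.mp hm
    have hsup : (Finset.univ.sup fun i => mpow A m i i) ≤ ((m * gr : ℝ) : WithBot ℝ) := by
      apply Finset.sup_le
      intro i _
      have hki := key m i i
      rw [show (m * gr + x i - x i : ℝ) = m * gr by ring] at hki
      exact hki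
    cases hv : (Finset.univ.sup fun i => mpow A m i i) with
    | bot => rw [WithBot.map_bot]; exact bot_le
    | coe r =>
        rw [hv, WithBot.coe_le_coe] at hsup
        rw [WithBot.map_coe, WithBot.coe_le_coe]
        have hm0 : (0 : ℝ) < m := by exact_mod_cast h1
        rw [div_le_iff₀ hm0]
        have := mul_comm (m : ℝ) gr
        linarith

lemma shuffle (b : WithBot ℝ) (p q r s : ℝ) (h : p + q = r + s) :
    b + (p : WithBot ℝ) + (q : WithBot ℝ) = b + (r : WithBot ℝ) + (s : WithBot ℝ) := by
  rw [add_assoc, add_assoc, ← WithBot.coe_add, ← WithBot.coe_add, h]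

/-- The minimum over x ∈ ℝⁿ of G(x) = max_{i,j}(A_{ij} + x_j − x_i) equals the
spectral radius λ of A, and it is attained. -/
theorem stmt_16 {n : ℕ} (A : Fin n → Fin n → WithBot ℝ) (hlam : specRad A ≠ ⊥) :
    IsLeast
      {v | ∃ x : Fin n → ℝ,
        (Finset.univ.sup fun i => Finset.univ.sup fun j =>
          A i j + ((x j - x i : ℝ) : WithBot ℝ)) = v}
      (specRad A) := by
  classical
  have hn : 0 < n := by
    rcases Nat.eq_zero_or_pos n with h | h
    · exfalso; apply hlam; subst h
      rw [specRad, Finset.Icc_eq_empty (by omega), Finset.sup_empty]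
    · exact h
  obtain ⟨lam, hlamv⟩ := WithBot.ne_bot_iff_exists.mp hlam
  constructor
  · set B : Fin n → Fin n → WithBot ℝ := fun i j => A i j + ((-lam : ℝ) : WithBot ℝ) with hB
    have hR : ∀ c, 1 ≤ c → c ≤ n → ∀ v : Fin n, mpow B c v v ≤ 0 := by
      intro c h1 h2 v
      have hAv : mpow A c v v ≤ (((c : ℝ) * lam : ℝ) : WithBot ℝ) := by
        have hterm : WithBot.map (fun r => r / (c : ℝ)) (Finset.univ.sup fun i => mpow A c i i)
            ≤ (lam : WithBot ℝ) := by
          rw [hlamv, specRad]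
          exact Finset.le_sup (f := fun m' : ℕ => WithBot.map (fun r => r / (m' : ℝ))
            (Finset.univ.sup fun i => mpow A m' i i)) (Finset.mem_Icc.mpr ⟨h1, h2⟩)
        have hv : mpow A c v v ≤ Finset.univ.sup fun i => mpow A c i i :=
          Finset.le_sup (f := fun i => mpow A c i i) (Finset.mem_univ v)
        cases hs : (Finset.univ.sup fun i => mpow A c i i) with
        | bot => rw [hs, le_bot_iff] at hv; rw [hv]; exact bot_le
        | coe r =>
            rw [hs] at hv
            rw [hs, WithBot.map_coe, WithBot.coe_le_coe] at hterm
            have hc0 : (0 : ℝ) < c := by exact_mod_cast h1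
            have hr : r ≤ (c : ℝ) * lam := by
              rw [div_le_iff₀ hc0] at hterm
              nlinarith [mul_comm lam (c : ℝ)]
            exact hv.trans (WithBot.coe_le_coe.mpr hr)
      calc mpow B c v v
          = mpow A c v v + ((-((c : ℝ) * lam) : ℝ) : WithBot ℝ) := mpow_shift A lam c v v
        _ ≤ (((c : ℝ) * lam : ℝ) : WithBot ℝ) + ((-((c : ℝ) * lam) : ℝ) : WithBot ℝ) :=
            add_le_add_left hAv _
        _ = 0 := by rw [← WithBot.coe_add]; norm_num
    have hxne : ∀ i : Fin n, xv B i ≠ ⊥ := by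
      intro i
      have h1 : mpow B 0 i i ≤ xv B i := mpow_le_xv B hR 0 i i
      have h0 : (0 : WithBot ℝ) ≤ xv B i := by simpa [mpow] using h1
      intro hbb
      rw [hbb] at h0
      simpa using h0
    set χ : Fin n → ℝ := fun i => (xv B i).unbot (hxne i) with hχ
    have hcoe : ∀ i, ((χ i : ℝ) : WithBot ℝ) = xv B i := fun i => WithBot.coe_unbot _ _
    refine ⟨χ, ?_⟩
    rw [← hlamv]
    apply le_antisymm
    · apply Finset.sup_le; intro i _
      apply Finset.sup_le; intro j _
      have hfe : B i j + ((χ j : ℝ) : WithBot ℝ) ≤ ((χ i : ℝ) : WithBot ℝ) := by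
        rw [hcoe, hcoe]; exact feas B hR i j
      have hAB : A i j = B i j + (lam : WithBot ℝ) := by
        simp only [hB]
        rw [add_assoc, ← WithBot.coe_add]
        norm_num
      rw [hAB]
      calc B i j + (lam : WithBot ℝ) + ((χ j - χ i : ℝ) : WithBot ℝ)
          = (B i j + ((χ j : ℝ) : WithBot ℝ)) + ((lam - χ i : ℝ) : WithBot ℝ) :=
            shuffle (B i j) lam (χ j - χ i) (χ j) (lam - χ i) (by ring)
        _ ≤ ((χ i : ℝ) : WithBot ℝ) + ((lam - χ i : ℝ) : WithBot ℝ) := add_le_add_left hfe _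
        _ = (lam : WithBot ℝ) := by
            rw [← WithBot.coe_add]
            exact WithBot.coe_eq_coe.mpr (by ring)
    · have h := lower_bound A hlam χ
      rw [← hlamv] at h
      exact h
  · rintro v ⟨x, rfl⟩
    exact lower_bound A hlam x
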